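/- Let n, t, k be positive integers with k < t ≤ (k+n)/2, and let F ⊆ 2^[n] be a family of rank t with |A \ B| ≤ k for all A, B ∈ F. If F is not trivially (t−k)-intersecting, then |F| ≤ ∑_{i=0}^{k} C(n, i) − C(n−t−2k, k). -/

import Mathlib

open Finset

/-- Kleitman-type injection lemma: if all pairwise differences in `Q` have size at most `k`,
then there is an injection from `Q` into sets of size at most `k`, each image being
contained in some member of `Q`. -/
private lemma key_inj {α : Type*} [DecidableEq α] (V : Finset α) :
    ∀ (k : ℕ) (Q : Finset (Finset α)), (∀ q ∈ Q, q ⊆ V) →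
    (∀ q ∈ Q, ∀ q' ∈ Q, (q \ q').card ≤ k) →
    ∃ f : Finset α → Finset α, Set.InjOn f ↑Q ∧
      ∀ q ∈ Q, (f q).card ≤ k ∧ f q ⊆ V ∧ ∃ C ∈ Q, f q ⊆ C := by
  induction V using Finset.induction_on with
  | empty =>
    intro k Q hsub hd
    refine ⟨id, fun a _ b _ h => h, fun q hq => ?_⟩
    have hq0 : q = ∅ := subset_empty.mp (hsub q hq)
    exact ⟨by simp [hq0], by simp [hq0], q, hq, Subset.refl _⟩
  | @insert z V' hz ih =>
    intro k Q hsub hd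
    rcases k with _ | k'
    · refine ⟨fun _ => ∅, ?_, fun q hq => ⟨by simp, by simp, q, hq, empty_subset _⟩⟩
      intro a ha b hb _
      simp only [mem_coe] at ha hb
      have h1 : a ⊆ b := sdiff_eq_empty_iff_subset.mp
        (card_eq_zero.mp (Nat.le_zero.mp (hd a ha b hb)))
      have h2 : b ⊆ a := sdiff_eq_empty_iff_subset.mp
        (card_eq_zero.mp (Nat.le_zero.mp (hd b hb a ha)))
      exact Subset.antisymm h1 h2
    · set Q0 := Q.filter (fun q => z ∉ q) with hQ0
      set Q1 := (Q.filter (fun q => z ∈ q)).image (fun q => q.erase z) with hQ1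
      set G := Q0 ∪ Q1 with hG
      set H := Q0 ∩ Q1 with hH
      have hQ0mem : ∀ q, q ∈ Q0 ↔ q ∈ Q ∧ z ∉ q := by intro q; simp [hQ0]
      have hQ1mem : ∀ g, g ∈ Q1 → insert z g ∈ Q ∧ z ∉ g := by
        intro g hg
        simp only [hQ1, mem_image, mem_filter] at hg
        obtain ⟨q, ⟨hqQ, hzq⟩, rfl⟩ := hg
        exact ⟨by rwa [insert_erase hzq], notMem_erase _ _⟩
      have hGsub : ∀ g ∈ G, g ⊆ V' := by
        intro g hg
        rcases mem_union.mp hg with h | h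
        · rcases (hQ0mem g).mp h with ⟨hgQ, hzg⟩
          intro x hx
          rcases mem_insert.mp (hsub g hgQ hx) with rfl | h2
          · exact absurd hx hzg
          · exact h2
        · obtain ⟨hgQ, hzg⟩ := hQ1mem g h
          intro x hx
          rcases mem_insert.mp (hsub _ hgQ (mem_insert_of_mem hx)) with rfl | h2
          · exact absurd hx hzg
          · exact h2
      have hlift : ∀ g ∈ G, ∃ q ∈ Q, g ⊆ q ∧ q ⊆ insert z g := by
        intro g hg
        rcases mem_union.mp hg with h | h
        · exact ⟨g, ((hQ0mem g).mp h).1, Subset.refl _, subset_insert _ _⟩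
        · exact ⟨insert z g, (hQ1mem g h).1, subset_insert _ _, Subset.refl _⟩
      have hGdiff : ∀ g ∈ G, ∀ g' ∈ G, (g \ g').card ≤ k' + 1 := by
        intro g hg g' hg'
        obtain ⟨q, hqQ, hgq, -⟩ := hlift g hg
        obtain ⟨q', hq'Q, -, hq'sub⟩ := hlift g' hg'
        have hsubd : g \ g' ⊆ q \ q' := by
          intro x hx
          rcases mem_sdiff.mp hx with ⟨hxg, hxg'⟩
          refine mem_sdiff.mpr ⟨hgq hxg, fun hxq' => ?_⟩
          rcases mem_insert.mp (hq'sub hxq') with rfl | h2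
          · exact hz (hGsub g hg hxg)
          · exact hxg' h2
        exact le_trans (card_le_card hsubd) (hd q hqQ q' hq'Q)
      have hHmem : ∀ h ∈ H, h ∈ Q ∧ insert z h ∈ Q ∧ z ∉ h := by
        intro h hh
        rcases mem_inter.mp hh with ⟨h0, h1⟩
        obtain ⟨hins, hzh⟩ := hQ1mem h h1
        exact ⟨((hQ0mem h).mp h0).1, hins, hzh⟩
      have hHsubG : H ⊆ G := inter_subset_left.trans subset_union_left
      have hHsub : ∀ h ∈ H, h ⊆ V' := fun h hh => hGsub h (hHsubG hh)
      have hHdiff : ∀ h ∈ H, ∀ h' ∈ H, (h \ h').card ≤ k' := by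
        intro h hh h' hh'
        obtain ⟨-, hins, hzh⟩ := hHmem h hh
        obtain ⟨hh'Q, -, hzh'⟩ := hHmem h' hh'
        have hsub2 : insert z (h \ h') ⊆ (insert z h) \ h' := by
          intro x hx
          rcases mem_insert.mp hx with rfl | hx2
          · exact mem_sdiff.mpr ⟨mem_insert_self _ _, hzh'⟩
          · rcases mem_sdiff.mp hx2 with ⟨a, b⟩
            exact mem_sdiff.mpr ⟨mem_insert_of_mem a, b⟩
        have h3 : (h \ h').card + 1 ≤ k' + 1 := by
          calc (h \ h').card + 1 = (insert z (h \ h')).card :=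
                (card_insert_of_notMem (fun hc => hzh (mem_sdiff.mp hc).1)).symm
            _ ≤ ((insert z h) \ h').card := card_le_card hsub2
            _ ≤ k' + 1 := hd _ hins _ hh'Q
        omega
      obtain ⟨fG, hfGinj, hfG⟩ := ih (k' + 1) G hGsub hGdiff
      obtain ⟨fH, hfHinj, hfH⟩ := ih k' H hHsub hHdiff
      have hmem0 : ∀ q ∈ Q, z ∉ q → q ∈ G :=
        fun q hq hzq => mem_union_left _ ((hQ0mem q).mpr ⟨hq, hzq⟩)
      have hmem1 : ∀ q ∈ Q, z ∈ q → q.erase z ∈ Q1 := by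
        intro q hq hzq
        simp only [hQ1, mem_image]
        exact ⟨q, mem_filter.mpr ⟨hq, hzq⟩, rfl⟩
      have hmemH : ∀ q ∈ Q, z ∈ q → q.erase z ∈ Q → q.erase z ∈ H :=
        fun q hq hzq he =>
          mem_inter.mpr ⟨(hQ0mem _).mpr ⟨he, notMem_erase _ _⟩, hmem1 q hq hzq⟩
      have hmemG1 : ∀ q ∈ Q, z ∈ q → q.erase z ∈ G :=
        fun q hq hzq => mem_union_right _ (hmem1 q hq hzq)
      have hzfG : ∀ g ∈ G, z ∉ fG g := fun g hg hzin => hz ((hfG g hg).2.1 hzin)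
      have hzfH : ∀ h ∈ H, z ∉ fH h := fun h hh hzin => hz ((hfH h hh).2.1 hzin)
      classical
      refine ⟨fun q => if z ∈ q then
          (if q.erase z ∈ Q then insert z (fH (q.erase z)) else fG (q.erase z))
          else fG q, ?_, ?_⟩
      · intro q1 hq1 q2 hq2 heq
        simp only [mem_coe] at hq1 hq2
        by_cases hz1 : z ∈ q1 <;> by_cases hz2 : z ∈ q2
        · by_cases he1 : q1.erase z ∈ Q <;> by_cases he2 : q2.erase z ∈ Q
          · simp only [if_pos hz1, if_pos hz2, if_pos he1, if_pos he2] at heq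
            have hH1 := hmemH q1 hq1 hz1 he1
            have hH2 := hmemH q2 hq2 hz2 he2
            have heq2 : fH (q1.erase z) = fH (q2.erase z) := by
              have h1 := hzfH _ hH1
              have h2 := hzfH _ hH2
              have h3 := congrArg (fun s => Finset.erase s z) heq
              simpa [erase_insert h1, erase_insert h2] using h3
            have heq3 := hfHinj (mem_coe.mpr hH1) (mem_coe.mpr hH2) heq2
            rw [← insert_erase hz1, ← insert_erase hz2, heq3]
          · simp only [if_pos hz1, if_pos hz2, if_pos he1, if_neg he2] at heq
            exact absurd (heq ▸ mem_insert_self z _) (hzfG _ (hmemG1 q2 hq2 hz2))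
          · simp only [if_pos hz1, if_pos hz2, if_neg he1, if_pos he2] at heq
            exact absurd (heq.symm ▸ mem_insert_self z _) (hzfG _ (hmemG1 q1 hq1 hz1))
          · simp only [if_pos hz1, if_pos hz2, if_neg he1, if_neg he2] at heq
            have heq3 := hfGinj (mem_coe.mpr (hmemG1 q1 hq1 hz1))
              (mem_coe.mpr (hmemG1 q2 hq2 hz2)) heq
            rw [← insert_erase hz1, ← insert_erase hz2, heq3]
        · by_cases he1 : q1.erase z ∈ Q
          · simp only [if_pos hz1, if_neg hz2, if_pos he1] at heq
            exact absurd (heq ▸ mem_insert_self z _) (hzfG _ (hmem0 q2 hq2 hz2))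
          · simp only [if_pos hz1, if_neg hz2, if_neg he1] at heq
            have heq3 := hfGinj (mem_coe.mpr (hmemG1 q1 hq1 hz1))
              (mem_coe.mpr (hmem0 q2 hq2 hz2)) heq
            rw [← heq3] at hq2
            exact absurd hq2 he1
        · by_cases he2 : q2.erase z ∈ Q
          · simp only [if_neg hz1, if_pos hz2, if_pos he2] at heq
            exact absurd (heq.symm ▸ mem_insert_self z _) (hzfG _ (hmem0 q1 hq1 hz1))
          · simp only [if_neg hz1, if_pos hz2, if_neg he2] at heq
            have heq3 := hfGinj (mem_coe.mpr (hmem0 q1 hq1 hz1))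
              (mem_coe.mpr (hmemG1 q2 hq2 hz2)) heq
            rw [heq3] at hq1
            exact absurd hq1 he2
        · simp only [if_neg hz1, if_neg hz2] at heq
          exact hfGinj (mem_coe.mpr (hmem0 q1 hq1 hz1)) (mem_coe.mpr (hmem0 q2 hq2 hz2)) heq
      · intro q hq
        by_cases hzq : z ∈ q
        · by_cases he : q.erase z ∈ Q
          · have hHm := hmemH q hq hzq he
            obtain ⟨hc, hsV, C, hC, hCsub⟩ := hfH _ hHm
            obtain ⟨-, hinsQ, -⟩ := hHmem C hC
            refine ⟨?_, ?_, ⟨insert z C, hinsQ, ?_⟩⟩ <;> simp only [if_pos hzq, if_pos he]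
            · calc (insert z (fH (q.erase z))).card ≤ (fH (q.erase z)).card + 1 :=
                    card_insert_le _ _
                _ ≤ k' + 1 := by omega
            · exact insert_subset_insert _ hsV
            · exact insert_subset_insert _ hCsub
          · have hGm := hmemG1 q hq hzq
            obtain ⟨hc, hsV, C, hC, hCsub⟩ := hfG _ hGm
            obtain ⟨q', hq'Q, hCq', -⟩ := hlift C hC
            refine ⟨?_, ?_, ⟨q', hq'Q, ?_⟩⟩ <;> simp only [if_pos hzq, if_neg he]
            · exact hc
            · exact hsV.trans (subset_insert _ _)
            · exact hCsub.trans hCq'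
        · have hGm := hmem0 q hq hzq
          obtain ⟨hc, hsV, C, hC, hCsub⟩ := hfG _ hGm
          obtain ⟨q', hq'Q, hCq', -⟩ := hlift C hC
          refine ⟨?_, ?_, ⟨q', hq'Q, ?_⟩⟩ <;> simp only [if_neg hzq]
          · exact hc
          · exact hsV.trans (subset_insert _ _)
          · exact hCsub.trans hCq'

theorem stmt_11 (n t k : ℕ) (hk : 0 < k) (hkt : k < t) (htn : 2 * t ≤ k + n)
    (F : Finset (Finset (Fin n)))
    (hrank : (∀ A ∈ F, A.card ≤ t) ∧ ∃ A ∈ F, A.card = t)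
    (hdiff : ∀ A ∈ F, ∀ B ∈ F, (A \ B).card ≤ k)
    (htriv : ¬ ∃ A : Finset (Fin n), A.card = t - k ∧ ∀ B ∈ F, A ⊆ B) :
    F.card ≤ ∑ i ∈ Finset.range (k + 1), n.choose i - (n - t - 2 * k).choose k := by
  classical
  obtain ⟨hub, A0, hA0F, hA0card⟩ := hrank
  have hus : ∀ C ∈ F, (C \ A0).card ≤ (A0 \ C).card := by
    intro C hC
    have h1 : (C \ A0).card + (C ∩ A0).card = C.card := card_sdiff_add_card_inter C A0
    have h2 : (A0 \ C).card + (A0 ∩ C).card = A0.card := card_sdiff_add_card_inter A0 C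
    rw [inter_comm C A0] at h1
    have h4 : C.card ≤ t := hub C hC
    omega
  have hsk : ∀ C ∈ F, (A0 \ C).card ≤ k := fun C hC => hdiff A0 hA0F C hC
  have huk : ∀ C ∈ F, (C \ A0).card ≤ k := fun C hC => hdiff C hC A0 hA0F
  have hfullS : ∀ C ∈ F, (C \ A0).card = k → (A0 \ C).card = k := by
    intro C hC hCk
    have := hus C hC
    have := hsk C hC
    omega
  -- the witness set W
  have hKL : ∃ W : Finset (Fin n), W.card ≤ 2 * k ∧
      ∀ C ∈ F, (C \ A0).card = k → ((C \ A0) ∩ W).Nonempty := by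
    have hpair : ∀ B ∈ F, ∀ C ∈ F, (C \ A0).card = k → ¬ (A0 \ B ⊆ A0 \ C) →
        ((C \ A0) ∩ (B \ A0)).Nonempty := by
      intro B hB C hC hCk hnsub
      have hsub1 : ((A0 \ B) \ (A0 \ C)) ∪ ((C \ A0) \ (B \ A0)) ⊆ C \ B := by
        intro x hx
        rcases mem_union.mp hx with hx | hx
        · rcases mem_sdiff.mp hx with ⟨hx1, hx2⟩
          rcases mem_sdiff.mp hx1 with ⟨hxA, hxB⟩
          refine mem_sdiff.mpr ⟨?_, hxB⟩
          by_contra hxC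
          exact hx2 (mem_sdiff.mpr ⟨hxA, hxC⟩)
        · rcases mem_sdiff.mp hx with ⟨hx1, hx2⟩
          rcases mem_sdiff.mp hx1 with ⟨hxC, hxA⟩
          exact mem_sdiff.mpr ⟨hxC, fun hxB => hx2 (mem_sdiff.mpr ⟨hxB, hxA⟩)⟩
      have hdisj : Disjoint ((A0 \ B) \ (A0 \ C)) ((C \ A0) \ (B \ A0)) := by
        rw [disjoint_left]
        intro x hx1 hx2
        exact (mem_sdiff.mp (mem_sdiff.mp hx2).1).2 (mem_sdiff.mp (mem_sdiff.mp hx1).1).1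
      have hcards : ((A0 \ B) \ (A0 \ C)).card + ((C \ A0) \ (B \ A0)).card ≤ k := by
        rw [← card_union_of_disjoint hdisj]
        exact le_trans (card_le_card hsub1) (hdiff C hC B hB)
      have hpos : 0 < ((A0 \ B) \ (A0 \ C)).card := card_pos.mpr (sdiff_nonempty.mpr hnsub)
      have hinter : ((C \ A0) \ (B \ A0)).card + ((C \ A0) ∩ (B \ A0)).card = (C \ A0).card :=
        card_sdiff_add_card_inter _ _
      rw [← card_pos]
      omega
    by_cases hex : ∃ B1 ∈ F, (A0 \ B1).card = k
    · obtain ⟨B1, hB1F, hB1k⟩ := hex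
      by_cases hall : ∀ B ∈ F, A0 \ B ⊆ A0 \ B1
      · exfalso
        apply htriv
        refine ⟨A0 \ (A0 \ B1), ?_, ?_⟩
        · rw [card_sdiff_of_subset sdiff_subset, hA0card, hB1k]
        · intro B hB x hx
          rcases mem_sdiff.mp hx with ⟨hxA, hx2⟩
          by_contra hxB
          exact hx2 (hall B hB (mem_sdiff.mpr ⟨hxA, hxB⟩))
      · push_neg at hall
        obtain ⟨B2, hB2F, hB2n⟩ := hall
        refine ⟨(B1 \ A0) ∪ (B2 \ A0), ?_, ?_⟩
        · calc ((B1 \ A0) ∪ (B2 \ A0)).card ≤ (B1 \ A0).card + (B2 \ A0).card :=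
              card_union_le _ _
            _ ≤ 2 * k := by
              have := huk B1 hB1F
              have := huk B2 hB2F
              omega
        · intro C hC hCk
          by_cases hsub : A0 \ B1 ⊆ A0 \ C
          · have heq : A0 \ B1 = A0 \ C := eq_of_subset_of_card_le hsub
              (by rw [hfullS C hC hCk, hB1k])
            have hn2 : ¬ (A0 \ B2 ⊆ A0 \ C) := by rw [← heq]; exact hB2n
            obtain ⟨x, hx⟩ := hpair B2 hB2F C hC hCk hn2
            exact ⟨x, mem_inter.mpr ⟨(mem_inter.mp hx).1,
              mem_union_right _ (mem_inter.mp hx).2⟩⟩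
          · obtain ⟨x, hx⟩ := hpair B1 hB1F C hC hCk hsub
            exact ⟨x, mem_inter.mpr ⟨(mem_inter.mp hx).1,
              mem_union_left _ (mem_inter.mp hx).2⟩⟩
    · refine ⟨∅, by simp, ?_⟩
      intro C hC hCk
      exact absurd ⟨C, hC, hfullS C hC hCk⟩ hex
  obtain ⟨f, hfinj, hfprop⟩ := key_inj (univ : Finset (Fin n)) k F
    (fun q _ => subset_univ q) hdiff
  obtain ⟨W, hWcard, hW⟩ := hKL
  set Z : Finset (Fin n) := univ \ (A0 ∪ W) with hZ
  set Ball : Finset (Finset (Fin n)) := univ.filter (fun I => I.card ≤ k) with hBall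
  set Im : Finset (Finset (Fin n)) :=
    univ.filter (fun I => I.card ≤ k ∧ ∃ C ∈ F, I ⊆ C) with hIm
  set Missed : Finset (Finset (Fin n)) := Z.powersetCard k with hMissed
  have hFIm : F.card ≤ Im.card := by
    apply card_le_card_of_injOn f
    · intro q hq
      obtain ⟨hc, -, C, hC, hCs⟩ := hfprop q hq
      simp only [mem_coe, hIm, mem_filter, mem_univ, true_and]
      exact ⟨hc, C, hC, hCs⟩
    · exact hfinj
  have hdisjIM : Disjoint Im Missed := by
    rw [disjoint_left]
    intro I hI hIM
    simp only [hIm, mem_filter, mem_univ, true_and] at hI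
    obtain ⟨hIk, C, hCF, hIC⟩ := hI
    rw [hMissed, mem_powersetCard] at hIM
    obtain ⟨hIZ, hIcard⟩ := hIM
    have hICA : I ⊆ C \ A0 := by
      intro x hx
      refine mem_sdiff.mpr ⟨hIC hx, fun hxA => ?_⟩
      have hxZ := hIZ hx
      rw [hZ, mem_sdiff] at hxZ
      exact hxZ.2 (mem_union_left _ hxA)
    have hCk : (C \ A0).card = k := by
      have h1 : k ≤ (C \ A0).card := by
        rw [← hIcard]
        exact card_le_card hICA
      have := huk C hCF
      omega
    have hIeq : I = C \ A0 := eq_of_subset_of_card_le hICA (by omega)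
    obtain ⟨x, hx⟩ := hW C hCF hCk
    rcases mem_inter.mp hx with ⟨hx1, hx2⟩
    rw [← hIeq] at hx1
    have hxZ := hIZ hx1
    rw [hZ, mem_sdiff] at hxZ
    exact hxZ.2 (mem_union_right _ hx2)
  have hsubBall : Im ∪ Missed ⊆ Ball := by
    intro I hI
    simp only [hBall, mem_filter, mem_univ, true_and]
    rcases mem_union.mp hI with h | h
    · exact ((mem_filter.mp h).2).1
    · rw [hMissed, mem_powersetCard] at h
      exact le_of_eq h.2
  have hBallcard : Ball.card = ∑ i ∈ Finset.range (k + 1), n.choose i := by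
    have hBeq : Ball = (Finset.range (k + 1)).biUnion
        (fun i => Finset.powersetCard i (univ : Finset (Fin n))) := by
      ext I
      simp only [hBall, mem_filter, mem_univ, true_and, mem_biUnion, mem_range,
        mem_powersetCard, Nat.lt_succ_iff]
      constructor
      · intro h
        exact ⟨I.card, h, subset_univ I, rfl⟩
      · rintro ⟨i, hik, -, rfl⟩
        exact hik
    rw [hBeq, card_biUnion]
    · apply Finset.sum_congr rfl
      intro i _
      rw [card_powersetCard, card_univ, Fintype.card_fin]
    · intro i _ j _ hij
      rw [Function.onFun, disjoint_left]
      intro I hI hJ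
      rw [mem_powersetCard] at hI hJ
      exact hij (hI.2 ▸ hJ.2 ▸ rfl)
  have hMissedcard : (n - t - 2 * k).choose k ≤ Missed.card := by
    rw [hMissed, card_powersetCard]
    apply Nat.choose_le_choose
    have h1 : (A0 ∪ W).card ≤ t + 2 * k := by
      calc (A0 ∪ W).card ≤ A0.card + W.card := card_union_le _ _
        _ ≤ t + 2 * k := by omega
    have h2 : Z.card = n - (A0 ∪ W).card := by
      rw [hZ, card_sdiff_of_subset (subset_univ _), card_univ, Fintype.card_fin]
    omega
  have hfinal : Im.card + Missed.card ≤ ∑ i ∈ Finset.range (k + 1), n.choose i := by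
    rw [← card_union_of_disjoint hdisjIM, ← hBallcard]
    exact card_le_card hsubBall
  omega
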